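/- Assume ∏_{i=0}^{N−1} B̂^i(0) = γ·Id with γ ∈ {−1, 1}, and let E, F, D_N(0) be the N×N matrices defined above. Suppose lim_{k→∞} k/ã_k = ∞. Then the matrix ℬ defines an unbounded quadratic form: for every C > 0 there exists a finitely supported, nonzero sequence x : ℕ → ℝ^N such that Σ_{k=0}^∞ ‖(ℬx)_k‖² > C²·Σ_{j=0}^∞ ‖x_j‖², where (ℬx)_k = Σ_{j<k} (γ^{k−j}/ã_k)·Fᵀ·x_j + (1/ã_k)·D_N(0)⁻¹·x_k + Σ_{j>k} (γ^{j−k}/ã_j)·F·x_j and ‖·‖ is the Euclidean norm on ℝ^N. -/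

import Mathlib

open scoped Matrix

/-- The product `C (n₀ + len - 1) * ⋯ * C n₀` of matrices, with larger indices on the left;
equal to the identity when `len = 0`. -/
def prodDesc (C : ℤ → Matrix (Fin 2) (Fin 2) ℝ) (n₀ : ℤ) : ℕ → Matrix (Fin 2) (Fin 2) ℝ
  | 0 => 1
  | len + 1 => C (n₀ + len) * prodDesc C n₀ len

/-- The transfer matrix `B̂^j(x)` associated with the sequences `α`, `β`. -/
noncomputable def transferMatrix (α β : ℤ → ℝ) (j : ℤ) (x : ℝ) : Matrix (Fin 2) (Fin 2) ℝ :=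
  !![0, 1; -(α (j - 1) / α j), (x - β j) / α j]

theorem stmt10 (N : ℕ) (hN : 2 ≤ N)
    (α β : ℤ → ℝ) (hαpos : ∀ j, 0 < α j)
    (hαper : ∀ j, α (j + N) = α j) (hβper : ∀ j, β (j + N) = β j)
    -- `W k n` is the orthonormal polynomial `w_n^{[k]}` associated with the shifted sequences
    (W : ℕ → ℕ → ℝ → ℝ)
    (hW0 : ∀ (k : ℕ) (x : ℝ), W k 0 x = 1)
    (hW1 : ∀ (k : ℕ) (x : ℝ), W k 1 x = (x - β k) / α k)
    (hWrec : ∀ k : ℕ, ∀ n : ℕ, 1 ≤ n → ∀ x : ℝ,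
      α ((n : ℤ) + k - 1) * W k (n - 1) x + β ((n : ℤ) + k) * W k n x
        + α ((n : ℤ) + k) * W k (n + 1) x = x * W k n x)
    (γ : ℝ) (hγ : γ = -1 ∨ γ = 1)
    (hProd : prodDesc (fun j => transferMatrix α β j 0) 0 N
      = γ • (1 : Matrix (Fin 2) (Fin 2) ℝ))
    (E F D : Matrix (Fin N) (Fin N) ℝ)
    (hE : ∀ i j : Fin N, E i j = if (i : ℕ) = N - 1 ∧ (j : ℕ) = 0 then 1 else 0)
    (hF : ∀ i j : Fin N, F i j =
      -(W 0 i 0 * W ((j : ℕ) + 1) (N - 1 - (j : ℕ)) 0) / (γ * α (j : ℕ)))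
    (hD : ∀ i j : Fin N, D i j =
      if i = j then β (i : ℕ)
      else if (i : ℕ) + 1 = (j : ℕ) then α (i : ℕ)
      else if (j : ℕ) + 1 = (i : ℕ) then α (j : ℕ)
      else 0)
    (atil : ℕ → ℝ) (hatil : ∀ k, 0 < atil k)
    (atil : ℕ → ℝ) (hatil : ∀ k, 0 < atil k)
    (hlim : Filter.Tendsto (fun k : ℕ => (k : ℝ) / atil k) Filter.atTop Filter.atTop) :
    ∀ C : ℝ, 0 < C → ∃ (M : ℕ) (x : ℕ → Fin N → ℝ),
      (∀ j, M ≤ j → x j = 0) ∧ x ≠ 0 ∧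
      ENNReal.ofReal (C ^ 2) * (∑' j : ℕ, ENNReal.ofReal (∑ i : Fin N, (x j i) ^ 2))
      < ∑' k : ℕ, ENNReal.ofReal (∑ i : Fin N,
        (((∑ j ∈ Finset.range k, (γ ^ (k - j) / atil k) • Fᵀ.mulVec (x j))
          + (1 / atil k) • D⁻¹.mulVec (x k)
          + ∑ j ∈ Finset.Ico (k + 1) M, (γ ^ (j - k) / atil j) • F.mulVec (x j)) i) ^ 2) := by
  intro C hC
  have hγ2 : γ ^ 2 = 1 := by rcases hγ with h | h <;> simp [h]
  have hγ0 : γ ≠ 0 := by rcases hγ with h | h <;> simp [h]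
  have hγj : ∀ m : ℕ, (γ ^ m) ^ 2 = 1 := by
    intro m; rw [← pow_mul, mul_comm, pow_mul, hγ2, one_pow]
  set i0 : Fin N := ⟨0, by omega⟩ with hi0
  set iL : Fin N := ⟨N - 1, by omega⟩ with hiL
  set S : ℝ := ∑ i : Fin N, (F i0 i) ^ 2 with hSdef
  -- the (i0, iL) entry of F is nonzero
  have hFiL : F i0 iL = -1 / (γ * α ((N - 1 : ℕ) : ℤ)) := by
    rw [hF i0 iL]
    have h1 : ((i0 : ℕ) : ℕ) = 0 := rfl
    have h2 : ((iL : ℕ) : ℕ) = N - 1 := rfl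
    rw [h1, h2, hW0, Nat.sub_self, hW0]
    ring
  have hFiLne : F i0 iL ≠ 0 := by
    rw [hFiL]
    have hα := hαpos ((N - 1 : ℕ) : ℤ)
    intro h
    rw [div_eq_zero_iff] at h
    rcases h with h | h
    · norm_num at h
    · exact (mul_ne_zero hγ0 (ne_of_gt hα)) h
  have hS : 0 < S := by
    have h1 : (F i0 iL) ^ 2 ≤ S := by
      exact Finset.single_le_sum (f := fun i => (F i0 i) ^ 2)
        (fun i _ => sq_nonneg _) (Finset.mem_univ iL)
    have h2 : 0 < (F i0 iL) ^ 2 :=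
      lt_of_le_of_ne (sq_nonneg _) (Ne.symm (pow_ne_zero 2 hFiLne))
    linarith
  -- choose T
  obtain ⟨T, hT1, hTS⟩ : ∃ T : ℝ, 1 ≤ T ∧ C ^ 2 < T ^ 2 * S / 4 := by
    refine ⟨4 * C ^ 2 / S + 1, ?_, ?_⟩
    · have : 0 ≤ 4 * C ^ 2 / S := by positivity
      linarith
    · have h : (4 * C ^ 2 / S) * S = 4 * C ^ 2 := by field_simp
      have ht0 : (0:ℝ) ≤ 4 * C ^ 2 / S := by positivity
      nlinarith [h, hS, mul_nonneg (mul_nonneg ht0 ht0) hS.le, sq_nonneg C]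
  have hT0 : 0 < T := lt_of_lt_of_le one_pos hT1
  -- choose K from the limit
  obtain ⟨K, hK⟩ := Filter.eventually_atTop.mp (hlim.eventually_ge_atTop T)
  set M : ℕ := max K 1 with hMdef
  have hM1 : 1 ≤ M := le_max_right K 1
  have hM0 : 0 < M := hM1
  -- the test vector
  set x : ℕ → Fin N → ℝ := fun j i => if j < M ∧ i = i0 then γ ^ j else 0 with hx
  have hsupp : ∀ j, M ≤ j → x j = 0 := by
    intro j hj
    funext i
    have : ¬ (j < M ∧ i = i0) := fun h => absurd h.1 (by omega)
    simp [hx, this]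
  refine ⟨M, x, hsupp, ?_, ?_⟩
  · -- x ≠ 0
    intro h
    have h0 := congrFun (congrFun h 0) i0
    simp [hx, hM0] at h0
  -- main inequality
  -- LHS computation
  have hL : ∀ j : ℕ, (∑ i : Fin N, (x j i) ^ 2) = if j < M then 1 else 0 := by
    intro j
    by_cases hj : j < M
    · simp only [hx, hj, true_and, if_pos]
      rw [show (∑ i : Fin N, (if i = i0 then γ ^ j else 0) ^ 2)
          = ∑ i : Fin N, (if i = i0 then (γ ^ j) ^ 2 else 0) from
        Finset.sum_congr rfl (fun i _ => by split <;> simp)]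
      rw [Finset.sum_ite_eq']
      simp [hγj j]
    · simp [hx, hj]
  have hLHS : (∑' j : ℕ, ENNReal.ofReal (∑ i : Fin N, (x j i) ^ 2)) = (M : ENNReal) := by
    have h1 : ∀ j, ENNReal.ofReal (∑ i : Fin N, (x j i) ^ 2)
        = if j < M then 1 else 0 := by
      intro j; rw [hL j]; split <;> simp
    calc (∑' j : ℕ, ENNReal.ofReal (∑ i : Fin N, (x j i) ^ 2))
        = ∑' j : ℕ, (if j < M then (1 : ENNReal) else 0) := tsum_congr h1
      _ = ∑ j ∈ Finset.range M, (if j < M then (1 : ENNReal) else 0) := by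
          refine tsum_eq_sum ?_
          intro j hj
          rw [Finset.mem_range] at hj
          simp [hj]
      _ = ∑ j ∈ Finset.range M, (1 : ENNReal) := by
          refine Finset.sum_congr rfl ?_
          intro j hj
          rw [Finset.mem_range] at hj
          simp [hj]
      _ = (M : ENNReal) := by simp
  -- the vector expression for k ≥ M
  have hg : ∀ k, M ≤ k → ∀ i : Fin N,
      ((∑ j ∈ Finset.range k, (γ ^ (k - j) / atil k) • Fᵀ.mulVec (x j))
        + (1 / atil k) • D⁻¹.mulVec (x k)
        + ∑ j ∈ Finset.Ico (k + 1) M, (γ ^ (j - k) / atil j) • F.mulVec (x j)) i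
      = (M : ℝ) * γ ^ k / atil k * F i0 i := by
    intro k hk i
    have hIco : Finset.Ico (k + 1) M = ∅ := Finset.Ico_eq_empty (by omega)
    rw [hIco, hsupp k hk]
    simp only [Finset.sum_empty, Matrix.mulVec_zero, smul_zero, add_zero,
      Pi.add_apply, Pi.zero_apply]
    rw [Finset.sum_apply]
    have hmv : ∀ j, (Fᵀ.mulVec (x j)) i = (if j < M then γ ^ j * F i0 i else 0) := by
      intro j
      simp only [Matrix.mulVec, dotProduct, Matrix.transpose_apply, hx]
      by_cases hj : j < M
      · simp only [hj, true_and, mul_ite, mul_zero, Finset.sum_ite_eq',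
          Finset.mem_univ, if_true]
        ring
      · simp [hj]
    have hterm : ∀ j ∈ Finset.range k,
        ((γ ^ (k - j) / atil k) • Fᵀ.mulVec (x j)) i
        = if j < M then γ ^ k / atil k * F i0 i else 0 := by
      intro j hj
      rw [Finset.mem_range] at hj
      simp only [Pi.smul_apply, smul_eq_mul, hmv j]
      by_cases hjM : j < M
      · rw [if_pos hjM, if_pos hjM]
        have h1 : γ ^ (k - j) * γ ^ j = γ ^ k := by
          rw [← pow_add, Nat.sub_add_cancel (le_of_lt hj)]
        have ha := ne_of_gt (hatil k)
        field_simp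
        linear_combination F i0 i * h1
      · rw [if_neg hjM, if_neg hjM, mul_zero]
    rw [Finset.sum_congr rfl hterm]
    have hsub : Finset.range M ⊆ Finset.range k := Finset.range_subset_range.mpr hk
    rw [← Finset.sum_subset hsub (by
      intro j hjk hjM
      rw [Finset.mem_range] at hjM
      simp [hjM])]
    rw [Finset.sum_congr rfl (fun j hj => if_pos (Finset.mem_range.mp hj))]
    rw [Finset.sum_const, Finset.card_range, nsmul_eq_mul]
    ring
  -- per-k lower bound for k ∈ [M, 2M)
  have hFk : ∀ k ∈ Finset.Ico M (2 * M),
      ENNReal.ofReal (T ^ 2 * S / 4)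
      ≤ ENNReal.ofReal (∑ i : Fin N,
        (((∑ j ∈ Finset.range k, (γ ^ (k - j) / atil k) • Fᵀ.mulVec (x j))
          + (1 / atil k) • D⁻¹.mulVec (x k)
          + ∑ j ∈ Finset.Ico (k + 1) M, (γ ^ (j - k) / atil j) • F.mulVec (x j)) i) ^ 2) := by
    intro k hk
    rw [Finset.mem_Ico] at hk
    obtain ⟨hkM, hk2M⟩ := hk
    have heq : (∑ i : Fin N,
        (((∑ j ∈ Finset.range k, (γ ^ (k - j) / atil k) • Fᵀ.mulVec (x j))
          + (1 / atil k) • D⁻¹.mulVec (x k)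
          + ∑ j ∈ Finset.Ico (k + 1) M, (γ ^ (j - k) / atil j) • F.mulVec (x j)) i) ^ 2)
        = ((M : ℝ) / atil k) ^ 2 * S := by
      rw [Finset.sum_congr rfl (fun i _ => by rw [hg k hkM i])]
      rw [show (∑ i : Fin N, ((M : ℝ) * γ ^ k / atil k * F i0 i) ^ 2)
          = ((M : ℝ) * γ ^ k / atil k) ^ 2 * S from by
        rw [hSdef, Finset.mul_sum]
        exact Finset.sum_congr rfl (fun i _ => by ring)]
      rw [show ((M : ℝ) * γ ^ k / atil k) ^ 2 = ((M : ℝ) / atil k) ^ 2 * (γ ^ k) ^ 2 from by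
        rw [div_pow, div_pow, mul_pow]; ring]
      rw [hγj k, mul_one]
    rw [heq]
    apply ENNReal.ofReal_le_ofReal
    -- T/2 ≤ M / atil k
    have hkK : K ≤ k := le_trans (le_max_left K 1) hkM
    have hTk : T ≤ (k : ℝ) / atil k := hK k hkK
    have hak := hatil k
    have h2 : T * atil k ≤ (k : ℝ) := (le_div_iff₀ hak).mp hTk
    have hk2M' : (k : ℝ) ≤ 2 * M := by exact_mod_cast Nat.le_of_lt hk2M
    have hhalf : T / 2 ≤ (M : ℝ) / atil k := by
      rw [div_le_div_iff₀ (by norm_num) hak]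
      linarith
    have hhalf0 : 0 ≤ T / 2 := by linarith
    have hpow : (T / 2) ^ 2 ≤ ((M : ℝ) / atil k) ^ 2 :=
      pow_le_pow_left₀ hhalf0 hhalf 2
    calc T ^ 2 * S / 4 = (T / 2) ^ 2 * S := by ring
      _ ≤ ((M : ℝ) / atil k) ^ 2 * S := mul_le_mul_of_nonneg_right hpow hS.le
  -- assemble
  rw [hLHS]
  refine lt_of_lt_of_le ?_ (ENNReal.sum_le_tsum (Finset.Ico M (2 * M)))
  refine lt_of_lt_of_le ?_ (Finset.sum_le_sum hFk)
  rw [Finset.sum_const, Nat.card_Ico, show 2 * M - M = M from by omega, nsmul_eq_mul]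
  rw [mul_comm (M : ENNReal) _]
  have hMne : (M : ENNReal) ≠ 0 := Nat.cast_ne_zero.mpr (by omega)
  rw [ENNReal.mul_lt_mul_iff_left hMne (ENNReal.natCast_ne_top M)]
  exact (ENNReal.ofReal_lt_ofReal_iff (by positivity)).mpr hTS
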